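/- Let L ∈ ℝ^{n×n} be a symmetric positive semidefinite matrix with L·1_n = 0, let Q ∈ ℝ^{n×n} be diagonal with positive diagonal entries, R ∈ ℝ^n, and let θ̄ ∈ ℝ^n be such that Qθ̄ + R ∈ span{1_n}. Then for every θ ∈ ℝ^n: (θ − θ̄)ᵀ Q L (Qθ + R) = (Qθ + R − (Qθ̄ + R))ᵀ L (Qθ + R − (Qθ̄ + R)) ≥ 0. -/

import Mathlib

open Matrix

/-- Communication term identity: for a Laplacian `L` (symmetric PSD, `L1 = 0`)
and `Qθ̄ + R ∈ span{1}`, one has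
`(θ−θ̄)ᵀQL(Qθ+R) = (Qθ+R−(Qθ̄+R))ᵀ L (Qθ+R−(Qθ̄+R)) ≥ 0`. -/
theorem laplacian_marginal_cost_identity {n : ℕ}
    (L : Matrix (Fin n) (Fin n) ℝ) (hL : L.PosSemidef)
    (hL1 : L *ᵥ (fun _ => (1 : ℝ)) = 0)
    (Q : Fin n → ℝ) (hQ : ∀ i, 0 < Q i) (R : Fin n → ℝ)
    (θb : Fin n → ℝ) (hθb : ∃ c : ℝ, ∀ i, Q i * θb i + R i = c) :
    ∀ θ : Fin n → ℝ,
      ((fun i => Q i * (θ i - θb i)) ⬝ᵥ (L *ᵥ fun i => Q i * θ i + R i)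
        = (fun i => (Q i * θ i + R i) - (Q i * θb i + R i)) ⬝ᵥ
            (L *ᵥ fun i => (Q i * θ i + R i) - (Q i * θb i + R i)))
      ∧ 0 ≤ (fun i => Q i * (θ i - θb i)) ⬝ᵥ (L *ᵥ fun i => Q i * θ i + R i) := by
  intro θ
  obtain ⟨c, hc⟩ := hθb
  set u : Fin n → ℝ := fun i => Q i * θ i + R i with hu
  set v : Fin n → ℝ := fun i => Q i * θb i + R i with hv
  have hvc : v = c • (fun _ => (1 : ℝ)) := by
    funext i; simp [hv, hc i]
  have hLv : L *ᵥ v = 0 := by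
    rw [hvc, Matrix.mulVec_smul, hL1, smul_zero]
  have hdiff : (fun i => Q i * (θ i - θb i)) = u - v := by
    funext i; simp [hu, hv]; ring
  have hLdiff : L *ᵥ (u - v) = L *ᵥ u := by
    rw [Matrix.mulVec_sub, hLv, sub_zero]
  have key : (fun i => Q i * (θ i - θb i)) ⬝ᵥ (L *ᵥ u)
      = (u - v) ⬝ᵥ (L *ᵥ (u - v)) := by
    rw [hdiff, hLdiff]
  have hpsd := hL.dotProduct_mulVec_nonneg (u - v)
  simp only [RCLike.star_def, star_trivial] at hpsd
  constructor
  · have : (fun i => (Q i * θ i + R i) - (Q i * θb i + R i)) = u - v := by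
      funext i; simp [hu, hv]
    rw [key, this]
  · rw [key]; exact hpsd
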